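/- arXiv:1102.3657 — 2 statements merged into one kernel-verified Lean document; each statement's English description precedes it below -/
import Mathlib

section
/- Let G be a topological group, Y a Hausdorff locally convex real topological vector space, n ≥ 1, X a one-parameter subgroup of G, and ψ₀, ψ₁, …, ψₙ : G → Y functions such that each ψⱼ is locally left uniformly continuous and, for every j < n and every g ∈ G, the directional derivative (D_X ψⱼ)(g) exists and equals ψ_{j+1}(g). Then for every g₀ ∈ G there is a neighborhood V₀ of g₀ such that for every neighborhood U of 0 in Y there exists δ > 0 with: for all g ∈ V₀ and all t with 0 < |t| < δ, the Taylor remainder ψ₀(g·X(t)) − Σ_{j=0}^{n} (tʲ/j!)·ψⱼ(g) belongs to tⁿ • U. -/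
open Filter Topology Pointwise

/-- A one-parameter subgroup of a topological group `G`: a continuous homomorphism
from the additive group of reals into `G`. -/
structure OneParamSubgroup (G : Type*) [Group G] [TopologicalSpace G] where
  toFun : ℝ → G
  continuous_toFun : Continuous toFun
  map_add : ∀ s t : ℝ, toFun (s + t) = toFun s * toFun t

/-- `X = X₁ + X₂` in the Trotter sense: `(X₁(t/n) X₂(t/n))^n → X(t)` uniformly on
compact subsets of `ℝ`. -/
def TrotterSum {G : Type*} [Group G] [TopologicalSpace G]
    (X X₁ X₂ : OneParamSubgroup G) : Prop :=
  ∀ K : Set ℝ, IsCompact K → ∀ W ∈ 𝓝 (1 : G), ∃ N : ℕ, ∀ n : ℕ, N ≤ n → ∀ t ∈ K,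
    (X.toFun t)⁻¹ * (X₁.toFun (t / (n : ℝ)) * X₂.toFun (t / (n : ℝ))) ^ n ∈ W

/-- `(D_X φ)(g)` exists and equals `z`. -/
def HasDirDerivAt {G Y : Type*} [Group G] [TopologicalSpace G]
    [AddCommGroup Y] [Module ℝ Y] [TopologicalSpace Y]
    (φ : G → Y) (X : OneParamSubgroup G) (g : G) (z : Y) : Prop :=
  Tendsto (fun t : ℝ => t⁻¹ • (φ (g * X.toFun t) - φ g)) (𝓝[≠] (0 : ℝ)) (𝓝 z)

/-- `φ : G → Y` is locally left uniformly continuous. -/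
def LocallyLeftUC {G Y : Type*} [Group G] [TopologicalSpace G]
    [AddCommGroup Y] [TopologicalSpace Y] (φ : G → Y) : Prop :=
  ∀ g₀ : G, ∃ V ∈ 𝓝 g₀, ∀ U ∈ 𝓝 (0 : Y), ∃ W ∈ 𝓝 (1 : G),
    ∀ x ∈ V, ∀ y ∈ V, x⁻¹ * y ∈ W → φ x - φ y ∈ U

/-- `φ` is of class LUC¹, with `D X g = (D_X φ)(g)`. -/
def IsLUC1 {G Y : Type*} [Group G] [TopologicalSpace G]
    [AddCommGroup Y] [Module ℝ Y] [TopologicalSpace Y]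
    (φ : G → Y) (D : OneParamSubgroup G → G → Y) : Prop :=
  LocallyLeftUC φ ∧ (∀ X g, HasDirDerivAt φ X g (D X g)) ∧
    ∀ X, LocallyLeftUC (D X)

section Helpers

set_option linter.unusedSectionVars false

/-- Derivative for TVS-valued functions of a real variable, defined via slopes. -/
def HasDerivAtTVS {Y : Type*} [AddCommGroup Y] [Module ℝ Y] [TopologicalSpace Y]
    (f : ℝ → Y) (v : Y) (s : ℝ) : Prop :=
  Tendsto (fun x : ℝ => (x - s)⁻¹ • (f x - f s)) (𝓝[≠] s) (𝓝 v)

variable {G Y : Type*} [Group G] [TopologicalSpace G] [IsTopologicalGroup G]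
    [AddCommGroup Y] [Module ℝ Y] [TopologicalSpace Y] [IsTopologicalAddGroup Y]
    [ContinuousSMul ℝ Y]

lemma OneParamSubgroup.map_zero' (X : OneParamSubgroup G) : X.toFun 0 = 1 := by
  have h := X.map_add 0 0
  simp only [add_zero] at h
  have h2 : X.toFun 0 * 1 = X.toFun 0 * X.toFun 0 := by rw [mul_one, ← h]
  exact (mul_left_cancel h2).symm

lemma OneParamSubgroup.map_neg' (X : OneParamSubgroup G) (s : ℝ) :
    X.toFun (-s) = (X.toFun s)⁻¹ := by
  have h := X.map_add (-s) s
  simp only [neg_add_cancel, X.map_zero'] at h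
  exact eq_inv_of_mul_eq_one_left h.symm

lemma HasDerivAtTVS.clm (ℓ : Y →L[ℝ] ℝ) {f : ℝ → Y} {v : Y} {s : ℝ}
    (h : HasDerivAtTVS f v s) : HasDerivAt (fun x => ℓ (f x)) (ℓ v) s := by
  rw [hasDerivAt_iff_tendsto_slope]
  have h2 := (ℓ.continuous.tendsto v).comp h
  apply h2.congr
  intro x
  simp [Function.comp, slope_def_module, map_smul, map_sub, smul_eq_mul]

lemma HasDerivAtTVS.continuousAt {f : ℝ → Y} {v : Y} {s : ℝ}
    (h : HasDerivAtTVS f v s) : ContinuousAt f s := by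
  have hsub : Tendsto (fun x : ℝ => x - s) (𝓝[≠] s) (𝓝 0) := by
    have h0 : Tendsto (fun x : ℝ => x - s) (𝓝 s) (𝓝 0) := by
      simpa using (continuous_sub_right s).tendsto s
    exact h0.mono_left nhdsWithin_le_nhds
  have h1 : Tendsto (fun x : ℝ => (x - s) • ((x - s)⁻¹ • (f x - f s))) (𝓝[≠] s)
      (𝓝 ((0 : ℝ) • v)) := hsub.smul h
  rw [zero_smul] at h1
  have h2 : Tendsto (fun x => f x - f s) (𝓝[≠] s) (𝓝 0) := by
    apply h1.congr'
    filter_upwards [eventually_mem_nhdsWithin] with x hx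
    rw [smul_inv_smul₀ (sub_ne_zero.2 hx)]
  have h3 : Tendsto f (𝓝[≠] s) (𝓝 (f s)) := by
    have h4 := h2.add_const (f s)
    simpa using h4
  rw [ContinuousAt, ← nhdsNE_sup_pure]
  exact h3.sup (tendsto_pure_nhds f s)

lemma HasDerivAtTVS.sub {f g : ℝ → Y} {v w : Y} {s : ℝ}
    (hf : HasDerivAtTVS f v s) (hg : HasDerivAtTVS g w s) :
    HasDerivAtTVS (fun x => f x - g x) (v - w) s := by
  have h := Filter.Tendsto.sub hf hg
  apply h.congr
  intro x
  simp only [← smul_sub]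
  congr 1
  abel

lemma hasDerivAtTVS_sum {ι : Type*} {A : ι → ℝ → Y} {A' : ι → Y} {s : ℝ}
    (t : Finset ι) (h : ∀ i ∈ t, HasDerivAtTVS (A i) (A' i) s) :
    HasDerivAtTVS (fun x => ∑ i ∈ t, A i x) (∑ i ∈ t, A' i) s := by
  have h2 := tendsto_finset_sum t h
  apply h2.congr
  intro x
  rw [← Finset.sum_sub_distrib, ← Finset.smul_sum]

lemma HasDerivAt.smul_const_tvs {u : ℝ → ℝ} {a : ℝ} {s : ℝ}
    (h : HasDerivAt u a s) (c : Y) :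
    HasDerivAtTVS (fun x => u x • c) (a • c) s := by
  have h1 : Tendsto (slope u s) (𝓝[≠] s) (𝓝 a) := hasDerivAt_iff_tendsto_slope.mp h
  have h2 := h1.smul_const c
  apply h2.congr
  intro x
  simp only [slope_def_module, smul_eq_mul, mul_smul, smul_sub]
  rw [sub_smul, smul_sub]

/-- Mean value theorem: if the derivative stays in a closed convex set `K`,
then the increment lies in `(b - a) • K`. -/
lemma mvt_mem [LocallyConvexSpace ℝ Y] {K : Set Y} (hKc : Convex ℝ K) (hKcl : IsClosed K)
    {a b : ℝ} (hab : a < b) {f f' : ℝ → Y}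
    (hf : ∀ s ∈ Set.Icc a b, HasDerivAtTVS f (f' s) s)
    (hK : ∀ s ∈ Set.Icc a b, f' s ∈ K) :
    f b - f a ∈ (b - a) • K := by
  by_contra h
  have hS_conv : Convex ℝ ((b - a) • K) := hKc.smul _
  have hS_cl : IsClosed ((b - a) • K) := hKcl.smul_of_ne_zero (by linarith)
  obtain ⟨ℓ, u, hsep, hu⟩ := geometric_hahn_banach_closed_point hS_conv hS_cl h
  have hcont : ContinuousOn (fun s => ℓ (f s)) (Set.Icc a b) := fun s hs =>
    (((hf s hs).clm ℓ).continuousAt).continuousWithinAt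
  have hderiv : ∀ s ∈ Set.Ioo a b, HasDerivAt (fun x => ℓ (f x)) (ℓ (f' s)) s := fun s hs =>
    (hf s (Set.Ioo_subset_Icc_self hs)).clm ℓ
  obtain ⟨c, hc, hslope⟩ := exists_hasDerivAt_eq_slope (fun x => ℓ (f x)) _ hab hcont hderiv
  have hmem : (b - a) • f' c ∈ (b - a) • K :=
    Set.smul_mem_smul_set (hK c (Set.Ioo_subset_Icc_self hc))
  have h1 : ℓ (f b - f a) = ℓ ((b - a) • f' c) := by
    rw [map_sub, map_smul, smul_eq_mul, hslope]
    rw [mul_div_assoc']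
    rw [mul_div_cancel_left₀ _ (by linarith : b - a ≠ 0)]
  have h2 := hsep _ hmem
  rw [← h1] at h2
  exact absurd (h2.trans hu) (lt_irrefl _)

/-- Directional derivative gives a genuine derivative along the one-parameter subgroup. -/
lemma hasDerivAtTVS_comp_oneParam (X : OneParamSubgroup G) {φ : G → Y} {dφ : G → Y}
    (h : ∀ g, HasDirDerivAt φ X g (dφ g)) (g : G) (s₀ : ℝ) :
    HasDerivAtTVS (fun s => φ (g * X.toFun s)) (dφ (g * X.toFun s₀)) s₀ := by
  have h1 : Tendsto (fun x : ℝ => x - s₀) (𝓝[≠] s₀) (𝓝[≠] (0 : ℝ)) := by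
    rw [tendsto_nhdsWithin_iff]
    constructor
    · have h0 : Tendsto (fun x : ℝ => x - s₀) (𝓝 s₀) (𝓝 0) := by
        simpa using (continuous_sub_right s₀).tendsto s₀
      exact h0.mono_left nhdsWithin_le_nhds
    · exact eventually_mem_nhdsWithin.mono (fun x hx => sub_ne_zero.2 hx)
  have h2 := (h (g * X.toFun s₀)).comp h1
  apply h2.congr
  intro x
  simp only [Function.comp_apply]
  congr 2
  rw [mul_assoc, ← X.map_add]
  ring_nf

lemma hasDerivAtTVS_taylor_poly (c : ℕ → Y) (m : ℕ) (s : ℝ) :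
    HasDerivAtTVS (fun s : ℝ => ∑ j ∈ Finset.range (m + 2), (s ^ j / (j.factorial : ℝ)) • c j)
      (∑ j ∈ Finset.range (m + 1), (s ^ j / (j.factorial : ℝ)) • c (j + 1)) s := by
  have key : ∀ j : ℕ, HasDerivAtTVS (fun s : ℝ => (s ^ j / (j.factorial : ℝ)) • c j)
      (((j : ℝ) * s ^ (j - 1) / (j.factorial : ℝ)) • c j) s := fun j =>
    (((hasDerivAt_pow j s).div_const _).smul_const_tvs _)
  have H := hasDerivAtTVS_sum (Finset.range (m + 2)) (fun j _ => key j)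
  convert H using 1
  rw [Finset.sum_range_succ' _ (m + 1)]
  simp only [Nat.cast_zero, zero_mul, zero_div, zero_smul, add_zero]
  apply Finset.sum_congr rfl
  intro j _
  congr 1
  rw [Nat.add_sub_cancel, Nat.factorial_succ, Nat.cast_mul, Nat.cast_add, Nat.cast_one]
  rw [eq_div_iff (by positivity : (((j : ℝ) + 1) * (j.factorial : ℝ)) ≠ 0)]
  field_simp

lemma taylor_sum_at_zero (c : ℕ → Y) (m : ℕ) :
    ∑ j ∈ Finset.range (m + 1), ((0 : ℝ) ^ j / (j.factorial : ℝ)) • c j = c 0 := by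
  rw [Finset.sum_eq_single_of_mem 0 (Finset.mem_range.2 (Nat.succ_pos m))]
  · simp
  · intro j _ hj
    simp [zero_pow hj]

lemma smul_set_subset_smul_set' {C : Set Y} (hC : Convex ℝ C) (h0 : (0 : Y) ∈ C)
    (hsym : ∀ y ∈ C, -y ∈ C) {a b : ℝ} (ha : |a| ≤ b) : a • C ⊆ b • C := by
  rintro _ ⟨c, hc, rfl⟩
  rcases eq_or_lt_of_le ((abs_nonneg a).trans ha) with hb | hb
  · have ha0 : a = 0 := abs_eq_zero.1 (le_antisymm (ha.trans hb.symm.le) (abs_nonneg a))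
    exact ⟨0, h0, by simp [ha0, ← hb]⟩
  · refine ⟨(a / b) • c, ?_, ?_⟩
    · set r := a / b with hr
      have hr1 : |r| ≤ 1 := by
        rw [hr, abs_div, abs_of_pos hb, div_le_one hb]; exact ha
      rcases le_or_gt 0 r with hr0 | hr0
      · have h2 := hC hc h0 hr0 (by rw [abs_of_nonneg hr0] at hr1; linarith)
          (by ring : r + (1 - r) = 1)
        simpa using h2
      · have h1 : (0 : ℝ) ≤ -r := by linarith
        have h3 := hC (hsym c hc) h0 h1 (by rw [abs_of_neg hr0] at hr1; linarith)
          (by ring : -r + (1 + r) = 1)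
        simpa [smul_neg] using h3
    · show b • ((a / b) • c) = a • c
      rw [smul_smul, mul_comm, div_mul_cancel₀ _ hb.ne']

end Helpers

theorem taylor_formula_LUC
    {G Y : Type*} [Group G] [TopologicalSpace G] [IsTopologicalGroup G]
    [AddCommGroup Y] [Module ℝ Y] [TopologicalSpace Y] [IsTopologicalAddGroup Y]
    [ContinuousSMul ℝ Y] [LocallyConvexSpace ℝ Y] [T2Space Y]
    (n : ℕ) (hn : 1 ≤ n) (X : OneParamSubgroup G) (ψ : ℕ → G → Y)
    (hUC : ∀ j ≤ n, LocallyLeftUC (ψ j))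
    (hD : ∀ j < n, ∀ g : G, HasDirDerivAt (ψ j) X g (ψ (j + 1) g)) :
    ∀ g₀ : G, ∃ V₀ ∈ 𝓝 g₀, ∀ U ∈ 𝓝 (0 : Y), ∃ δ > (0 : ℝ),
      ∀ g ∈ V₀, ∀ t : ℝ, 0 < |t| → |t| < δ →
        ψ 0 (g * X.toFun t)
          - ∑ j ∈ Finset.range (n + 1), (t ^ j / (j.factorial : ℝ)) • ψ j g
          ∈ (t ^ n) • U := by
  intro g₀
  obtain ⟨V, hVmem, hVspec⟩ := hUC n le_rfl g₀
  have hcontm : Continuous (fun p : G × ℝ => p.1 * X.toFun p.2) :=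
    continuous_fst.mul (X.continuous_toFun.comp continuous_snd)
  have hpre : (fun p : G × ℝ => p.1 * X.toFun p.2) ⁻¹' V ∈ 𝓝 ((g₀, 0) : G × ℝ) := by
    apply hcontm.continuousAt.preimage_mem_nhds
    simpa [X.map_zero'] using hVmem
  obtain ⟨V₁, hV₁, T, hT, hsub⟩ := mem_nhds_prod_iff.mp hpre
  obtain ⟨δ₀, hδ₀pos, hball⟩ := Metric.mem_nhds_iff.mp hT
  have hVX : ∀ g ∈ V₁, ∀ s : ℝ, |s| < δ₀ → g * X.toFun s ∈ V := by
    intro g hg s hs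
    exact hsub (Set.mk_mem_prod hg (hball (by simpa [Real.dist_eq] using hs)))
  have hV₁V : ∀ g ∈ V₁, g ∈ V := by
    intro g hg
    have h := hVX g hg 0 (by simpa using hδ₀pos)
    simpa [X.map_zero'] using h
  refine ⟨V₁, hV₁, ?_⟩
  intro U hU
  -- construct a closed convex symmetric set C ⊆ U which is a neighborhood of 0
  obtain ⟨D, hDmem, hDcl, hDU⟩ := exists_mem_nhds_isClosed_subset hU
  obtain ⟨C₀, ⟨hC₀mem, hC₀conv⟩, hC₀D⟩ :=
    (LocallyConvexSpace.convex_basis_zero ℝ Y).mem_iff.mp hDmem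
  have h0C₀ : (0 : Y) ∈ C₀ := mem_of_mem_nhds hC₀mem
  set C₁ : Set Y := C₀ ∩ -C₀ with hC₁def
  have hC₁mem : C₁ ∈ 𝓝 (0 : Y) := Filter.inter_mem hC₀mem (neg_mem_nhds_zero Y hC₀mem)
  have hC₁symm : ∀ y ∈ C₁, -y ∈ C₁ := by
    rintro y ⟨hy1, hy2⟩
    exact ⟨hy2, by simpa using hy1⟩
  set C : Set Y := closure C₁ with hCdef
  have hCconv : Convex ℝ C := (hC₀conv.inter hC₀conv.neg).closure
  have hCcl : IsClosed C := isClosed_closure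
  have h0C : (0 : Y) ∈ C := subset_closure ⟨h0C₀, by simpa using h0C₀⟩
  have hCsym : ∀ y ∈ C, -y ∈ C := fun y hy =>
    (Set.MapsTo.closure hC₁symm continuous_neg) hy
  have hCU : C ⊆ U :=
    (closure_minimal (Set.inter_subset_left.trans hC₀D) hDcl).trans hDU
  have hCmem : C ∈ 𝓝 (0 : Y) := mem_of_superset hC₁mem subset_closure
  obtain ⟨W, hWmem, hWspec⟩ := hVspec C hCmem
  have hXW : ∀ᶠ s in 𝓝 (0 : ℝ), X.toFun (-s) ∈ W := by
    have hc : Tendsto (fun s : ℝ => X.toFun (-s)) (𝓝 0) (𝓝 1) := by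
      have h := (X.continuous_toFun.comp continuous_neg).tendsto (0 : ℝ)
      simpa [X.map_zero', Function.comp_def] using h
    exact hc hWmem
  obtain ⟨δ₁, hδ₁pos, hδ₁⟩ := Metric.eventually_nhds_iff_ball.mp hXW
  set δ := min δ₀ δ₁ with hδdef
  have hδpos : 0 < δ := lt_min hδ₀pos hδ₁pos
  refine ⟨δ, hδpos, ?_⟩
  have hkey : ∀ g ∈ V₁, ∀ s : ℝ, |s| < δ → ψ n (g * X.toFun s) - ψ n g ∈ C := by
    intro g hg s hs
    apply hWspec _ (hVX g hg s (hs.trans_le (min_le_left _ _))) g (hV₁V g hg)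
    have heq : (g * X.toFun s)⁻¹ * g = X.toFun (-s) := by
      rw [X.map_neg', mul_inv_rev, mul_assoc, inv_mul_cancel, mul_one]
    rw [heq]
    apply hδ₁
    simpa [Real.dist_eq] using hs.trans_le (min_le_right _ _)
  have main : ∀ m : ℕ, ∀ k : ℕ, k + m = n → ∀ g ∈ V₁, ∀ t : ℝ, |t| < δ →
      ψ k (g * X.toFun t)
        - ∑ j ∈ Finset.range (m + 1), (t ^ j / (j.factorial : ℝ)) • ψ (k + j) g
        ∈ (|t| ^ m) • C := by
    intro m
    induction m with
    | zero =>
      intro k hk g hg t ht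
      obtain rfl : k = n := by omega
      have h := hkey g hg t ht
      refine Set.mem_smul_set.2 ⟨_, h, ?_⟩
      simp [Finset.sum_range_one]
    | succ m ih =>
      intro k hk g hg t ht
      have hkn : k < n := by omega
      have hk1 : (k + 1) + m = n := by omega
      set f : ℝ → Y := fun s => ψ k (g * X.toFun s)
          - ∑ j ∈ Finset.range (m + 2), (s ^ j / (j.factorial : ℝ)) • ψ (k + j) g with hfdef
      have hf0 : f 0 = 0 := by
        rw [hfdef]
        simp only
        rw [taylor_sum_at_zero (fun j => ψ (k + j) g) (m + 1)]
        simp [X.map_zero']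
      have hderiv : ∀ s : ℝ, HasDerivAtTVS f
          (ψ (k + 1) (g * X.toFun s)
            - ∑ j ∈ Finset.range (m + 1), (s ^ j / (j.factorial : ℝ)) • ψ (k + 1 + j) g) s := by
        intro s
        have h1 := hasDerivAtTVS_comp_oneParam X (hD k hkn) g s
        have h2 := hasDerivAtTVS_taylor_poly (fun j => ψ (k + j) g) m s
        have h3 := HasDerivAtTVS.sub h1 h2
        have h4 : ∑ j ∈ Finset.range (m + 1), (s ^ j / (j.factorial : ℝ)) • ψ (k + (j + 1)) g
            = ∑ j ∈ Finset.range (m + 1), (s ^ j / (j.factorial : ℝ)) • ψ (k + 1 + j) g := by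
          refine Finset.sum_congr rfl fun j _ => ?_
          rw [show k + (j + 1) = k + 1 + j from by omega]
        rw [hfdef]
        simpa [h4] using h3
      have hmemK : ∀ s : ℝ, |s| ≤ |t| → |s| < δ →
          (ψ (k + 1) (g * X.toFun s)
            - ∑ j ∈ Finset.range (m + 1), (s ^ j / (j.factorial : ℝ)) • ψ (k + 1 + j) g)
            ∈ (|t| ^ m) • C := by
        intro s hs hsδ
        have h1 := ih (k + 1) hk1 g hg s hsδ
        have h2 : (|s| : ℝ) ^ m • C ⊆ (|t| ^ m) • C := by
          apply smul_set_subset_smul_set' hCconv h0C hCsym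
          rw [abs_of_nonneg (pow_nonneg (abs_nonneg s) m)]
          exact pow_le_pow_left₀ (abs_nonneg s) hs m
        exact h2 h1
      rcases eq_or_ne t 0 with rfl | ht0
      · change f 0 ∈ _
        refine Set.mem_smul_set.2 ⟨0, h0C, ?_⟩
        rw [smul_zero, hf0]
      · rcases ht0.lt_or_gt with htneg | htpos
        · -- t < 0 : interval [t, 0]
          have habs : ∀ s ∈ Set.Icc t 0, |s| ≤ |t| ∧ |s| < δ := by
            intro s hs
            have h1 : |s| ≤ |t| := by
              rw [abs_of_nonpos hs.2, abs_of_neg htneg]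
              linarith [hs.1]
            exact ⟨h1, h1.trans_lt ht⟩
          have hmvt := mvt_mem (hCconv.smul _)
            ((hCcl.smul_of_ne_zero (pow_ne_zero _ (abs_ne_zero.2 ht0)))) htneg
            (fun s _ => hderiv s)
            (fun s hs => hmemK s (habs s hs).1 (habs s hs).2)
          rw [hf0, zero_sub, zero_sub] at hmvt
          obtain ⟨y, hy, hyeq⟩ := hmvt
          obtain ⟨c, hc, rfl⟩ := hy
          change f t ∈ _
          refine Set.mem_smul_set.2 ⟨-c, hCsym c hc, ?_⟩
          have hyeq' : (-t) • (|t| ^ m • c) = -f t := hyeq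
          have hft : f t = -((-t) • (|t| ^ m • c)) := by rw [hyeq', neg_neg]
          rw [hft, smul_neg, smul_smul]
          rw [neg_eq_iff_eq_neg, neg_neg]
          congr 1
          rw [abs_of_neg htneg]
          ring
        · -- 0 < t : interval [0, t]
          have habs : ∀ s ∈ Set.Icc 0 t, |s| ≤ |t| ∧ |s| < δ := by
            intro s hs
            have h1 : |s| ≤ |t| := by
              rw [abs_of_nonneg hs.1, abs_of_pos htpos]
              exact hs.2
            exact ⟨h1, h1.trans_lt ht⟩
          have hmvt := mvt_mem (hCconv.smul _)
            ((hCcl.smul_of_ne_zero (pow_ne_zero _ (abs_ne_zero.2 ht0)))) htpos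
            (fun s _ => hderiv s)
            (fun s hs => hmemK s (habs s hs).1 (habs s hs).2)
          rw [hf0, sub_zero, sub_zero] at hmvt
          obtain ⟨c, hc, hceq⟩ := Set.mem_smul_set.1 hmvt
          obtain ⟨c', hc', rfl⟩ := hc
          change f t ∈ _
          refine Set.mem_smul_set.2 ⟨c', hc', ?_⟩
          have hceq' : t • (|t| ^ m • c') = f t := hceq
          rw [← hceq', smul_smul]
          congr 1
          rw [abs_of_pos htpos]
          ring
  intro g hg t htpos htδ
  have ht0 : t ≠ 0 := by
    intro h
    rw [h] at htpos
    simp at htpos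
  have hmain := main n 0 (zero_add n) g hg t htδ
  simp only [zero_add] at hmain
  obtain ⟨c, hc, hceq⟩ := Set.mem_smul_set.1 hmain
  rcases le_or_gt 0 (t ^ n) with hpos | hneg
  · have habs : |t| ^ n = t ^ n := by rw [← abs_pow, abs_of_nonneg hpos]
    exact Set.mem_smul_set.2 ⟨c, hCU hc, by rw [← habs, hceq]⟩
  · have habs : |t| ^ n = -(t ^ n) := by rw [← abs_pow, abs_of_neg hneg]
    refine Set.mem_smul_set.2 ⟨-c, hCU (hCsym c hc), ?_⟩
    rw [smul_neg, ← neg_smul, ← habs, hceq]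
end

section
/- Let G be a topological group, Y a Hausdorff locally convex real topological vector space, and φ : G → Y a function of class LUC². If X, X₁, X₂ are one-parameter subgroups of G such that for every compact set K ⊆ ℝ and every neighborhood W of the identity in G there exists N with: for all n ≥ N and all t ∈ K, X(t²)⁻¹·(X₁(t/n)·X₂(t/n)·X₁(t/n)⁻¹·X₂(t/n)⁻¹)^{n²} ∈ W, then for every g ∈ G one has (D_X φ)(g) = (D_{X₁}(D_{X₂} φ))(g) − (D_{X₂}(D_{X₁} φ))(g). -/
open Filter Topology Pointwise

/-- `φ` is of class LUC², with first derivatives `D` and iterated derivatives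
`D2 Z₁ Z₂ g = (D_{Z₁}(D_{Z₂} φ))(g)`. -/
def IsLUC2 {G Y : Type*} [Group G] [TopologicalSpace G]
    [AddCommGroup Y] [Module ℝ Y] [TopologicalSpace Y]
    (φ : G → Y) (D : OneParamSubgroup G → G → Y)
    (D2 : OneParamSubgroup G → OneParamSubgroup G → G → Y) : Prop :=
  IsLUC1 φ D ∧ (∀ Z₁ Z₂ g, HasDirDerivAt (D Z₂) Z₁ g (D2 Z₁ Z₂ g)) ∧
    ∀ Z₁ Z₂, LocallyLeftUC (D2 Z₁ Z₂)

-- ==== Auxiliary lemmas ====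
set_option linter.unusedSectionVars false

section Basics

variable {G : Type*} [Group G] [TopologicalSpace G]

namespace OneParamSubgroup

theorem map_zero (Z : OneParamSubgroup G) : Z.toFun 0 = 1 := by
  have h := Z.map_add 0 0
  rw [add_zero] at h
  exact (left_eq_mul.1 h)

theorem map_neg (Z : OneParamSubgroup G) (t : ℝ) : Z.toFun (-t) = (Z.toFun t)⁻¹ := by
  have h := Z.map_add t (-t)
  rw [add_neg_cancel, map_zero] at h
  exact eq_inv_of_mul_eq_one_right (by rw [← h])

end OneParamSubgroup

end Basics
section Calc

variable {G : Type*} [Group G] [TopologicalSpace G]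

theorem hasDerivAt_of_dirDeriv {f ζ : G → ℝ} {Z : OneParamSubgroup G}
    (h : ∀ b, HasDirDerivAt f Z b (ζ b)) (a : G) (r₀ : ℝ) :
    HasDerivAt (fun r => f (a * Z.toFun r)) (ζ (a * Z.toFun r₀)) r₀ := by
  rw [hasDerivAt_iff_tendsto_slope_zero]
  have := h (a * Z.toFun r₀)
  unfold HasDirDerivAt at this
  convert this using 2 with t
  rw [mul_assoc, ← Z.map_add]

/-- Mean value theorem along a one-parameter subgroup. -/
theorem mvt_dirDeriv {f ζ : G → ℝ} {Z : OneParamSubgroup G}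
    (h : ∀ b, HasDirDerivAt f Z b (ζ b)) (a : G) {u : ℝ} (hu : u ≠ 0) :
    ∃ θ : ℝ, |θ| ≤ |u| ∧ f (a * Z.toFun u) - f a = u * ζ (a * Z.toFun θ) := by
  have hF : ∀ r, HasDerivAt (fun r => f (a * Z.toFun r)) (ζ (a * Z.toFun r)) r :=
    hasDerivAt_of_dirDeriv h a
  have hF0 : f (a * Z.toFun 0) = f a := by rw [Z.map_zero, mul_one]
  rcases hu.lt_or_gt with hlt | hlt
  · obtain ⟨θ, hθ, heq⟩ := exists_hasDerivAt_eq_slope (fun r => f (a * Z.toFun r))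
      (fun r => ζ (a * Z.toFun r)) hlt
      (fun r _ => (hF r).continuousAt.continuousWithinAt) (fun r _ => hF r)
    rw [hF0, eq_div_iff (by linarith : (0:ℝ) - u ≠ 0)] at heq
    exact ⟨θ, by rw [abs_le]; constructor <;> linarith [abs_of_neg hlt, hθ.1, hθ.2],
      by linear_combination heq⟩
  · obtain ⟨θ, hθ, heq⟩ := exists_hasDerivAt_eq_slope (fun r => f (a * Z.toFun r))
      (fun r => ζ (a * Z.toFun r)) hlt
      (fun r _ => (hF r).continuousAt.continuousWithinAt) (fun r _ => hF r)
    rw [hF0, eq_div_iff (by linarith : u - (0:ℝ) ≠ 0)] at heq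
    exact ⟨θ, by rw [abs_le]; constructor <;> linarith [abs_of_pos hlt, hθ.1, hθ.2],
      by linear_combination -heq⟩

/-- Second order Taylor formula with Lagrange remainder along a one-parameter subgroup. -/
theorem taylor2_dirDeriv {f ζ ξ : G → ℝ} {Z : OneParamSubgroup G}
    (h1 : ∀ b, HasDirDerivAt f Z b (ζ b)) (h2 : ∀ b, HasDirDerivAt ζ Z b (ξ b))
    (a : G) {u : ℝ} (hu : u ≠ 0) :
    ∃ θ : ℝ, |θ| ≤ |u| ∧
      f (a * Z.toFun u) - f a - u * ζ a = u ^ 2 / 2 * ξ (a * Z.toFun θ) := by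
  set F : ℝ → ℝ := fun r => f (a * Z.toFun r) with hFdef
  set F₁ : ℝ → ℝ := fun r => ζ (a * Z.toFun r) with hF1def
  set F₂ : ℝ → ℝ := fun r => ξ (a * Z.toFun r) with hF2def
  have hF : ∀ r, HasDerivAt F (F₁ r) r := hasDerivAt_of_dirDeriv h1 a
  have hF₁ : ∀ r, HasDerivAt F₁ (F₂ r) r := hasDerivAt_of_dirDeriv h2 a
  have hu2 : u ^ 2 ≠ 0 := pow_ne_zero 2 hu
  set M : ℝ := (F u - F 0 - u * F₁ 0) * 2 / u ^ 2 with hM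
  set gf : ℝ → ℝ := fun r => F u - F r - (u - r) * F₁ r - M * (u - r) ^ 2 / 2 with hgf
  have hg' : ∀ r, HasDerivAt gf ((u - r) * (M - F₂ r)) r := by
    intro r
    have h1' : HasDerivAt (fun r => F u - F r) (-F₁ r) r := (hF r).const_sub (F u)
    have h2' : HasDerivAt (fun r : ℝ => (u - r)) (-1) r := by
      simpa using (hasDerivAt_id r).const_sub u
    have h3' : HasDerivAt (fun r => (u - r) * F₁ r) (-1 * F₁ r + (u - r) * F₂ r) r :=
      h2'.mul (hF₁ r)
    have h4' : HasDerivAt (fun r : ℝ => M * (u - r) ^ 2 / 2)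
        (M * (2 * (u - r) ^ 1 * -1) / 2) r := (((h2'.pow 2).const_mul M)).div_const 2
    have := (h1'.sub h3').sub h4'
    convert this using 1
    · rfl
    · rfl
    · rfl
    ring
  have hgu : gf u = 0 := by simp [hgf]
  have hg0 : gf 0 = 0 := by
    have : M * u ^ 2 = (F u - F 0 - u * F₁ 0) * 2 := by
      rw [hM]; field_simp
    simp only [hgf, sub_zero]
    linarith [this]
  have hcont : ∀ r : ℝ, ContinuousAt gf r := fun r => (hg' r).continuousAt
  have key : ∃ θ : ℝ, |θ| ≤ |u| ∧ (u - θ) * (M - F₂ θ) = 0 ∧ θ ≠ u := by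
    rcases hu.lt_or_gt with hlt | hlt
    · obtain ⟨θ, hθ, heq⟩ := exists_hasDerivAt_eq_zero (f := gf)
        (f' := fun r => (u - r) * (M - F₂ r)) hlt
        (fun r _ => (hcont r).continuousWithinAt) (hgu.trans hg0.symm) (fun r _ => hg' r)
      exact ⟨θ, by rw [abs_le]; constructor <;> linarith [abs_of_neg hlt, hθ.1, hθ.2],
        heq, ne_of_gt hθ.1⟩
    · obtain ⟨θ, hθ, heq⟩ := exists_hasDerivAt_eq_zero (f := gf)
        (f' := fun r => (u - r) * (M - F₂ r)) hlt
        (fun r _ => (hcont r).continuousWithinAt) (hg0.trans hgu.symm) (fun r _ => hg' r)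
      exact ⟨θ, by rw [abs_le]; constructor <;> linarith [abs_of_pos hlt, hθ.1, hθ.2],
        heq, ne_of_lt hθ.2⟩
  obtain ⟨θ, hθabs, heq, hne⟩ := key
  have huθ : u - θ ≠ 0 := sub_ne_zero.2 (Ne.symm hne)
  have hMeq : F₂ θ = M := by
    rcases mul_eq_zero.1 heq with h | h
    · exact absurd h huθ
    · linarith [h]
  have hF0 : F 0 = f a := by simp only [hFdef]; rw [Z.map_zero, mul_one]
  have hF10 : F₁ 0 = ζ a := by simp only [hF1def]; rw [Z.map_zero, mul_one]
  refine ⟨θ, hθabs, ?_⟩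
  have hthis : F₂ θ = (F u - f a - u * ζ a) * 2 / u ^ 2 := by rw [hMeq, hM, hF0, hF10]
  rw [eq_div_iff hu2] at hthis
  show F u - f a - u * ζ a = u ^ 2 / 2 * F₂ θ
  linear_combination (-1/2 : ℝ) * hthis

end Calc
section UC

variable {G : Type*} [Group G] [TopologicalSpace G] [IsTopologicalGroup G]
variable {Y : Type*} [AddCommGroup Y] [TopologicalSpace Y] [IsTopologicalAddGroup Y]

theorem LocallyLeftUC.continuous {ψ : G → Y} (h : LocallyLeftUC ψ) : Continuous ψ := by
  rw [continuous_iff_continuousAt]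
  intro a
  obtain ⟨V, hV, H⟩ := h a
  have key : Tendsto (fun y => ψ a - ψ y) (𝓝 a) (𝓝 0) := by
    rw [Filter.tendsto_def]
    intro U hU
    obtain ⟨W, hW, hUW⟩ := H U hU
    have h1 : {y : G | a⁻¹ * y ∈ W} ∈ 𝓝 a := by
      have : ContinuousAt (fun y : G => a⁻¹ * y) a := (continuous_const.mul continuous_id).continuousAt
      have := this.preimage_mem_nhds (by simpa using hW)
      simpa [Set.preimage] using this
    filter_upwards [hV, h1] with y hyV hyW
    exact hUW a (mem_of_mem_nhds hV) y hyV hyW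
  have : Tendsto (fun y => ψ a - (ψ a - ψ y)) (𝓝 a) (𝓝 (ψ a - 0)) :=
    tendsto_const_nhds.sub key
  show Tendsto ψ (𝓝 a) (𝓝 (ψ a))
  simpa using this

end UC

section Scalarize

variable {G : Type*} [Group G] [TopologicalSpace G]
variable {Y : Type*} [AddCommGroup Y] [Module ℝ Y] [TopologicalSpace Y] [IsTopologicalAddGroup Y]
  [ContinuousSMul ℝ Y]

theorem HasDirDerivAt.clm_comp (ℓ : Y →L[ℝ] ℝ) {φ : G → Y} {Z : OneParamSubgroup G} {a : G}
    {w : Y} (h : HasDirDerivAt φ Z a w) : HasDirDerivAt (fun x => ℓ (φ x)) Z a (ℓ w) := by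
  have := (ℓ.continuous.tendsto w).comp h
  unfold HasDirDerivAt
  convert this using 2 with t
  simp [Function.comp, map_sub, map_smul]

end Scalarize

/-- The commutator word. -/
def cword {G : Type*} [Group G] [TopologicalSpace G] (X₁ X₂ : OneParamSubgroup G) (u : ℝ) : G :=
  X₁.toFun u * X₂.toFun u * (X₁.toFun u)⁻¹ * (X₂.toFun u)⁻¹

section KeyEstimate

variable {G : Type*} [Group G] [TopologicalSpace G]

set_option maxHeartbeats 1000000 in
theorem key_estimate (X₁ X₂ : OneParamSubgroup G) (f d₁ d₂ e₁₁ e₁₂ e₂₁ e₂₂ : G → ℝ)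
    (hd1 : ∀ a, HasDirDerivAt f X₁ a (d₁ a)) (hd2 : ∀ a, HasDirDerivAt f X₂ a (d₂ a))
    (h11 : ∀ a, HasDirDerivAt d₁ X₁ a (e₁₁ a)) (h21 : ∀ a, HasDirDerivAt d₁ X₂ a (e₂₁ a))
    (h12 : ∀ a, HasDirDerivAt d₂ X₁ a (e₁₂ a)) (h22 : ∀ a, HasDirDerivAt d₂ X₂ a (e₂₂ a))
    (g : G) (ε : ℝ) (V₃ : Set G)
    (hV : ∀ pt ∈ V₃, |e₁₁ pt - e₁₁ g| ≤ ε ∧ |e₁₂ pt - e₁₂ g| ≤ ε ∧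
      |e₂₁ pt - e₂₁ g| ≤ ε ∧ |e₂₂ pt - e₂₂ g| ≤ ε)
    (h : G) (u : ℝ) (hu : u ≠ 0)
    (hin : ∀ v₁ v₂ v₃ v₄ : ℝ, |v₁| ≤ |u| → |v₂| ≤ |u| → |v₃| ≤ |u| → |v₄| ≤ |u| →
      h * X₁.toFun v₁ * X₂.toFun v₂ * X₁.toFun v₃ * X₂.toFun v₄ ∈ V₃) :
    |f (h * cword X₁ X₂ u) - f h - u ^ 2 * (e₁₂ g - e₂₁ g)| ≤ 6 * ε * u ^ 2 := by
  have hmu : -u ≠ 0 := neg_ne_zero.2 hu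
  have habs : ∀ v : ℝ, |v| ≤ |-u| → |v| ≤ |u| := by intro v hv; rwa [abs_neg] at hv
  have hmuabs : |-u| ≤ |u| := by rw [abs_neg]
  have h0abs : |(0:ℝ)| ≤ |u| := by simp
  have huabs : |u| ≤ |u| := le_refl _
  obtain ⟨θ1, hθ1, E1⟩ := taylor2_dirDeriv hd1 h11 h hu
  obtain ⟨θ2, hθ2, E2⟩ := taylor2_dirDeriv hd2 h22 (h * X₁.toFun u) hu
  obtain ⟨θ3, hθ3, E3⟩ := taylor2_dirDeriv hd1 h11 (h * X₁.toFun u * X₂.toFun u) hmu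
  obtain ⟨θ4, hθ4, E4⟩ :=
    taylor2_dirDeriv hd2 h22 (h * X₁.toFun u * X₂.toFun u * X₁.toFun (-u)) hmu
  obtain ⟨σ1, hσ1, E5⟩ := mvt_dirDeriv h11 h hu
  obtain ⟨σ2, hσ2, E6⟩ := mvt_dirDeriv h21 (h * X₁.toFun u) hu
  obtain ⟨σ3, hσ3, E7⟩ := mvt_dirDeriv h22 (h * X₁.toFun u) hu
  obtain ⟨σ4, hσ4, E8⟩ := mvt_dirDeriv h12 (h * X₁.toFun u * X₂.toFun u) hmu
  replace hθ3 := habs _ hθ3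
  replace hθ4 := habs _ hθ4
  replace hσ4 := habs _ hσ4
  -- memberships
  have m1 : h * X₁.toFun θ1 ∈ V₃ := by
    simpa [OneParamSubgroup.map_zero] using hin θ1 0 0 0 hθ1 h0abs h0abs h0abs
  have m2 : h * X₁.toFun u * X₂.toFun θ2 ∈ V₃ := by
    simpa [OneParamSubgroup.map_zero] using hin u θ2 0 0 huabs hθ2 h0abs h0abs
  have m3 : h * X₁.toFun u * X₂.toFun u * X₁.toFun θ3 ∈ V₃ := by
    simpa [OneParamSubgroup.map_zero] using hin u u θ3 0 huabs huabs hθ3 h0abs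
  have m4 : h * X₁.toFun u * X₂.toFun u * X₁.toFun (-u) * X₂.toFun θ4 ∈ V₃ :=
    hin u u (-u) θ4 huabs huabs hmuabs hθ4
  have m5 : h * X₁.toFun σ1 ∈ V₃ := by
    simpa [OneParamSubgroup.map_zero] using hin σ1 0 0 0 hσ1 h0abs h0abs h0abs
  have m6 : h * X₁.toFun u * X₂.toFun σ2 ∈ V₃ := by
    simpa [OneParamSubgroup.map_zero] using hin u σ2 0 0 huabs hσ2 h0abs h0abs
  have m7 : h * X₁.toFun u * X₂.toFun σ3 ∈ V₃ := by
    simpa [OneParamSubgroup.map_zero] using hin u σ3 0 0 huabs hσ3 h0abs h0abs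
  have m8 : h * X₁.toFun u * X₂.toFun u * X₁.toFun σ4 ∈ V₃ := by
    simpa [OneParamSubgroup.map_zero] using hin u u σ4 0 huabs huabs hσ4 h0abs
  have r1 := (hV _ m1).1
  have r2 := (hV _ m2).2.2.2
  have r3 := (hV _ m3).1
  have r4 := (hV _ m4).2.2.2
  have r5 := (hV _ m5).1
  have r6 := (hV _ m6).2.2.1
  have r7 := (hV _ m7).2.2.2
  have r8 := (hV _ m8).2.1
  have hA4 : h * X₁.toFun u * X₂.toFun u * X₁.toFun (-u) * X₂.toFun (-u)
      = h * cword X₁ X₂ u := by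
    simp [cword, OneParamSubgroup.map_neg, mul_assoc]
  set S : ℝ :=
      (e₁₁ (h * X₁.toFun θ1) - e₁₁ g) / 2
    + (e₂₂ (h * X₁.toFun u * X₂.toFun θ2) - e₂₂ g) / 2
    + (e₁₁ (h * X₁.toFun u * X₂.toFun u * X₁.toFun θ3) - e₁₁ g) / 2
    + (e₂₂ (h * X₁.toFun u * X₂.toFun u * X₁.toFun (-u) * X₂.toFun θ4) - e₂₂ g) / 2
    - (e₁₁ (h * X₁.toFun σ1) - e₁₁ g)
    - (e₂₁ (h * X₁.toFun u * X₂.toFun σ2) - e₂₁ g)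
    - (e₂₂ (h * X₁.toFun u * X₂.toFun σ3) - e₂₂ g)
    + (e₁₂ (h * X₁.toFun u * X₂.toFun u * X₁.toFun σ4) - e₁₂ g) with hS
  have main : f (h * cword X₁ X₂ u) - f h - u ^ 2 * (e₁₂ g - e₂₁ g) = u ^ 2 * S := by
    rw [← hA4, hS]
    linear_combination E1 + E2 + E3 + E4 - u * E5 - u * E6 - u * E7 - u * E8
  clear_value S
  have hSb : |S| ≤ 6 * ε := by
    rw [abs_le] at r1 r2 r3 r4 r5 r6 r7 r8 ⊢
    constructor <;> [linarith [r1.1, r2.1, r3.1, r4.1, r5.2, r6.2, r7.2, r8.1];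
      linarith [r1.2, r2.2, r3.2, r4.2, r5.1, r6.1, r7.1, r8.2]]
  calc |f (h * cword X₁ X₂ u) - f h - u ^ 2 * (e₁₂ g - e₂₁ g)| = |u ^ 2 * S| := by rw [main]
    _ = u ^ 2 * |S| := by rw [abs_mul, abs_of_nonneg (sq_nonneg u)]
    _ ≤ u ^ 2 * (6 * ε) := mul_le_mul_of_nonneg_left hSb (sq_nonneg u)
    _ = 6 * ε * u ^ 2 := by ring

end KeyEstimate
section Powers

/-- Arithmetic decomposition: any `k ≤ n²` satisfies `k + b² = j² + a² + e` with
`j, a, b ≤ n` and `e ≤ 1`. -/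
theorem sq_decomp (n k : ℕ) (hk : k ≤ n ^ 2) :
    ∃ j a b e : ℕ, j ≤ n ∧ a ≤ n ∧ b ≤ n ∧ e ≤ 1 ∧ k + b ^ 2 = j ^ 2 + a ^ 2 + e := by
  set j := Nat.sqrt k with hj
  have h1 : j ^ 2 ≤ k := Nat.sqrt_le' k
  have h2 : k < (j + 1) ^ 2 := Nat.lt_succ_sqrt' k
  have hjn : j ≤ n := by
    have := Nat.sqrt_le_sqrt hk
    rwa [Nat.sqrt_eq'] at this
  set r := k - j ^ 2 with hrdef
  have hkr : k = j ^ 2 + r := (Nat.add_sub_cancel' h1).symm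
  have hr2j : r ≤ 2 * j := by
    have hexp : (j + 1) ^ 2 = j ^ 2 + 2 * j + 1 := by ring
    rw [hexp] at h2
    omega
  rcases Nat.even_or_odd r with ⟨c, hc⟩ | ⟨c, hc⟩
  · -- r = c + c
    rcases Nat.eq_zero_or_pos c with hc0 | hc0
    · exact ⟨j, 0, 0, 0, hjn, Nat.zero_le n, Nat.zero_le n, Nat.zero_le 1, by
        subst hc0; simp [hkr, hc]⟩
    · obtain ⟨c', rfl⟩ : ∃ c', c = c' + 1 := ⟨c - 1, by omega⟩
      refine ⟨j, c' + 1, c', 1, hjn, by omega, by omega, le_refl 1, ?_⟩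
      have : k = j ^ 2 + (2 * c' + 2) := by rw [hkr, hc]; ring
      rw [this]; ring
  · -- r = 2*c + 1
    have hcj : c + 1 ≤ j := by omega
    refine ⟨j, c + 1, c, 0, hjn, by omega, by omega, Nat.zero_le 1, ?_⟩
    have : k = j ^ 2 + (2 * c + 1) := by rw [hkr, hc]
    rw [this]; ring

variable {G : Type*} [Group G] [TopologicalSpace G] [IsTopologicalGroup G]

theorem cword_continuous (X₁ X₂ : OneParamSubgroup G) : Continuous (cword X₁ X₂) := by
  unfold cword
  exact ((X₁.continuous_toFun.mul X₂.continuous_toFun).mul X₁.continuous_toFun.inv).mul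
    X₂.continuous_toFun.inv

theorem cword_zero (X₁ X₂ : OneParamSubgroup G) : cword X₁ X₂ 0 = 1 := by
  simp [cword, OneParamSubgroup.map_zero]

/-- Uniform control of square powers of the commutator word. -/
theorem sq_powers_small (X X₁ X₂ : OneParamSubgroup G)
    (hcomm : ∀ K : Set ℝ, IsCompact K → ∀ W ∈ 𝓝 (1 : G), ∃ N : ℕ,
      ∀ n : ℕ, N ≤ n → ∀ t ∈ K,
        (X.toFun (t ^ 2))⁻¹ *
          (X₁.toFun (t / (n : ℝ)) * X₂.toFun (t / (n : ℝ)) *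
            (X₁.toFun (t / (n : ℝ)))⁻¹ * (X₂.toFun (t / (n : ℝ)))⁻¹) ^ (n ^ 2) ∈ W)
    (W : Set G) (hW : W ∈ 𝓝 (1 : G)) :
    ∃ δ > (0:ℝ), ∃ N : ℕ, 1 ≤ N ∧ ∀ n : ℕ, N ≤ n → ∀ s : ℝ, |s| ≤ δ → ∀ m ≤ n,
      (cword X₁ X₂ (s / (n : ℝ))) ^ (m ^ 2) ∈ W := by
  obtain ⟨V₁, hV₁, hsplit⟩ := exists_nhds_one_split hW
  -- δ₁ : the subgroup X is close to 1
  have hXt : Filter.Tendsto (fun t : ℝ => X.toFun (t ^ 2)) (𝓝 0) (𝓝 1) := by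
    have h2 : Filter.Tendsto (fun t : ℝ => t ^ 2) (𝓝 0) (𝓝 0) := by
      simpa using (continuous_pow 2).tendsto (0:ℝ)
    have := (X.continuous_toFun.tendsto 0).comp h2
    rwa [X.map_zero] at this
  obtain ⟨δ₁, hδ₁pos, hδ₁⟩ := Metric.eventually_nhds_iff.1 (hXt.eventually hV₁)
  -- N₀ from the commutator hypothesis
  obtain ⟨N₀, hN₀⟩ := hcomm (Set.Icc (-1:ℝ) 1) isCompact_Icc V₁ hV₁
  -- δ₂ : small powers, for m < N₀
  have hsmall : ∀ᶠ w in 𝓝 (0:ℝ), ∀ i ∈ Finset.range (N₀ ^ 2 + 1), (cword X₁ X₂ w) ^ i ∈ W := by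
    rw [Filter.eventually_all_finset]
    intro i _
    have : Filter.Tendsto (fun w : ℝ => (cword X₁ X₂ w) ^ i) (𝓝 0) (𝓝 1) := by
      have := ((cword_continuous X₁ X₂).pow i).tendsto (0:ℝ)
      rwa [Pi.pow_apply, cword_zero, one_pow] at this
    exact this.eventually hW
  obtain ⟨δ₂, hδ₂pos, hδ₂⟩ := Metric.eventually_nhds_iff.1 hsmall
  refine ⟨min 1 (min (δ₁/2) (δ₂/2)), by positivity, max N₀ 1, le_max_right _ _, ?_⟩
  intro n hn s hs m hm
  have hn1 : 1 ≤ n := le_trans (le_max_right N₀ 1) hn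
  have hnR : (1:ℝ) ≤ (n:ℝ) := by exact_mod_cast hn1
  have hs1 : |s| ≤ 1 := le_trans hs (min_le_left _ _)
  have hsδ₁ : |s| < δ₁ := lt_of_le_of_lt (le_trans hs (le_trans (min_le_right _ _)
    (min_le_left _ _))) (by linarith)
  have hsδ₂ : |s| < δ₂ := lt_of_le_of_lt (le_trans hs (le_trans (min_le_right _ _)
    (min_le_right _ _))) (by linarith)
  rcases Nat.eq_zero_or_pos m with rfl | hm1
  · simpa using mem_of_mem_nhds hW
  by_cases hmN : m < N₀
  · -- small powers route
    have hsn : dist (s / (n:ℝ)) 0 < δ₂ := by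
      rw [Real.dist_eq, sub_zero, abs_div, abs_of_nonneg (by positivity : (0:ℝ) ≤ (n:ℝ))]
      calc |s| / (n:ℝ) ≤ |s| / 1 := by
            apply div_le_div_of_nonneg_left (abs_nonneg s) one_pos hnR
          _ = |s| := div_one _
          _ < δ₂ := hsδ₂
    refine hδ₂ hsn _ (Finset.mem_range.2 ?_)
    have : m ^ 2 ≤ N₀ ^ 2 := Nat.pow_le_pow_left (le_of_lt hmN) 2
    omega
  · -- Trotter route
    push_neg at hmN
    set t : ℝ := s * m / n with ht
    have hmR : (1:ℝ) ≤ (m:ℝ) := by exact_mod_cast hm1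
    have hmnR : (m:ℝ) ≤ (n:ℝ) := by exact_mod_cast hm
    have habs_t : |t| ≤ |s| := by
      rw [ht, abs_div, abs_mul, Nat.abs_cast, abs_of_nonneg (by positivity : (0:ℝ) ≤ (n:ℝ))]
      rw [div_le_iff₀ (by linarith : (0:ℝ) < (n:ℝ))]
      calc |s| * (m:ℝ) ≤ |s| * (n:ℝ) := by
            exact mul_le_mul_of_nonneg_left hmnR (abs_nonneg s)
        _ = |s| * (n:ℝ) := rfl
    have htK : t ∈ Set.Icc (-1:ℝ) 1 := by
      rw [Set.mem_Icc]
      constructor <;> [linarith [neg_abs_le t, habs_t, hs1]; linarith [le_abs_self t, habs_t, hs1]]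
    have htm : t / (m:ℝ) = s / (n:ℝ) := by
      rw [ht]
      field_simp
    have hXin : X.toFun (t ^ 2) ∈ V₁ := by
      apply hδ₁
      rw [Real.dist_eq, sub_zero]
      calc |t| ≤ |s| := habs_t
        _ < δ₁ := hsδ₁
    have hcm := hN₀ m hmN t htK
    rw [htm] at hcm
    have := hsplit _ hXin _ hcm
    rw [mul_inv_cancel_left] at this
    exact this

/-- Uniform control of all powers `k ≤ n²` of the commutator word. -/
theorem powers_small (X X₁ X₂ : OneParamSubgroup G)
    (hcomm : ∀ K : Set ℝ, IsCompact K → ∀ W ∈ 𝓝 (1 : G), ∃ N : ℕ,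
      ∀ n : ℕ, N ≤ n → ∀ t ∈ K,
        (X.toFun (t ^ 2))⁻¹ *
          (X₁.toFun (t / (n : ℝ)) * X₂.toFun (t / (n : ℝ)) *
            (X₁.toFun (t / (n : ℝ)))⁻¹ * (X₂.toFun (t / (n : ℝ)))⁻¹) ^ (n ^ 2) ∈ W)
    (W : Set G) (hW : W ∈ 𝓝 (1 : G)) :
    ∃ δ > (0:ℝ), ∃ N : ℕ, 1 ≤ N ∧ ∀ n : ℕ, N ≤ n → ∀ s : ℝ, |s| ≤ δ → ∀ k ≤ n ^ 2,
      (cword X₁ X₂ (s / (n : ℝ))) ^ k ∈ W := by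
  obtain ⟨V₁, hV₁, hsplit₁⟩ := exists_nhds_one_split hW
  obtain ⟨V₂, hV₂, hsplit₂⟩ := exists_nhds_one_split hV₁
  set V : Set G := V₂ ∩ V₂⁻¹ with hVdef
  have hV : V ∈ 𝓝 (1:G) := Filter.inter_mem hV₂ (inv_mem_nhds_one G hV₂)
  obtain ⟨δ, hδpos, N, hN1, hP⟩ := sq_powers_small X X₁ X₂ hcomm V hV
  refine ⟨δ, hδpos, N, hN1, ?_⟩
  intro n hn s hs k hk
  have hn1' : 1 ≤ n := le_trans hN1 hn
  obtain ⟨j, a, b, e, hj, ha, hb, he, heq⟩ := sq_decomp n k hk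
  set x : G := cword X₁ X₂ (s / (n : ℝ)) with hx
  have hmem : ∀ m ≤ n, x ^ (m ^ 2) ∈ V := fun m hm => hP n hn s hs m hm
  have hxj : x ^ (j ^ 2) ∈ V₂ := (hmem j hj).1
  have hxa : x ^ (a ^ 2) ∈ V₂ := (hmem a ha).1
  have hxb : (x ^ (b ^ 2))⁻¹ ∈ V₂ := by
    have := (hmem b hb).2
    simpa using this
  have hxe : x ^ e ∈ V₂ := by
    interval_cases e
    · simpa using (hmem 0 (Nat.zero_le n)).1
    · simpa using (hmem 1 hn1').1
  have hkeq : x ^ k = (x ^ (j ^ 2) * x ^ (a ^ 2)) * (x ^ e * (x ^ (b ^ 2))⁻¹) := by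
    have h1 : x ^ k * x ^ (b ^ 2) = x ^ (j ^ 2) * x ^ (a ^ 2) * x ^ e := by
      rw [← pow_add, ← pow_add, ← pow_add, heq]
    have := eq_mul_inv_of_mul_eq h1
    rw [this]
    group
  rw [hkeq]
  exact hsplit₁ _ (hsplit₂ _ hxj _ hxa) _ (hsplit₂ _ hxe _ hxb)

end Powers
section Assembly

theorem abs_small_nhds {p : ℝ → Prop} (h : ∀ᶠ v in 𝓝 (0:ℝ), p v) :
    ∃ δ > (0:ℝ), ∀ v : ℝ, |v| ≤ δ → p v := by
  obtain ⟨ε, hε, H⟩ := Metric.eventually_nhds_iff.1 h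
  exact ⟨ε/2, by linarith, fun v hv => H (by rw [Real.dist_eq, sub_zero]; linarith)⟩

variable {G : Type*} [Group G] [TopologicalSpace G] [IsTopologicalGroup G]

theorem scalar_limit (X X₁ X₂ : OneParamSubgroup G)
    (hcomm : ∀ K : Set ℝ, IsCompact K → ∀ W ∈ 𝓝 (1 : G), ∃ N : ℕ,
      ∀ n : ℕ, N ≤ n → ∀ t ∈ K,
        (X.toFun (t ^ 2))⁻¹ *
          (X₁.toFun (t / (n : ℝ)) * X₂.toFun (t / (n : ℝ)) *
            (X₁.toFun (t / (n : ℝ)))⁻¹ * (X₂.toFun (t / (n : ℝ)))⁻¹) ^ (n ^ 2) ∈ W)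
    (f d₁ d₂ e₁₁ e₁₂ e₂₁ e₂₂ : G → ℝ)
    (hfc : Continuous f) (hc11 : Continuous e₁₁) (hc12 : Continuous e₁₂)
    (hc21 : Continuous e₂₁) (hc22 : Continuous e₂₂)
    (hd1 : ∀ a, HasDirDerivAt f X₁ a (d₁ a)) (hd2 : ∀ a, HasDirDerivAt f X₂ a (d₂ a))
    (h11 : ∀ a, HasDirDerivAt d₁ X₁ a (e₁₁ a)) (h21 : ∀ a, HasDirDerivAt d₁ X₂ a (e₂₁ a))
    (h12 : ∀ a, HasDirDerivAt d₂ X₁ a (e₁₂ a)) (h22 : ∀ a, HasDirDerivAt d₂ X₂ a (e₂₂ a))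
    (g : G) (L : ℝ) (hL : HasDirDerivAt f X g L) :
    L = e₁₂ g - e₂₁ g := by
  set β : ℝ := e₁₂ g - e₂₁ g with hβ
  set A : ℝ → ℝ := fun s => (f (g * X.toFun (s ^ 2)) - f g) / s ^ 2 with hA
  -- Claim A : A tends to L along 0⁺
  have hsq : Filter.Tendsto (fun s : ℝ => s ^ 2) (𝓝[>] (0:ℝ)) (𝓝[≠] (0:ℝ)) := by
    apply tendsto_nhdsWithin_of_tendsto_nhds_of_eventually_within
    · simpa using ((continuous_pow 2).tendsto (0:ℝ)).mono_left nhdsWithin_le_nhds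
    · filter_upwards [self_mem_nhdsWithin] with s hs
      exact pow_ne_zero 2 (ne_of_gt hs)
  have claimA : Filter.Tendsto A (𝓝[>] (0:ℝ)) (𝓝 L) := by
    have hcomp := hL.comp hsq
    apply Filter.Tendsto.congr _ hcomp
    intro s
    simp only [Function.comp, hA, smul_eq_mul]
    rw [inv_mul_eq_div]
  -- Claim B : A tends to β along 0⁺
  have claimB : Filter.Tendsto A (𝓝[>] (0:ℝ)) (𝓝 β) := by
    rw [Metric.tendsto_nhdsWithin_nhds]
    intro ε hε
    set ε' : ℝ := ε / 8 with hε'def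
    have hε' : 0 < ε' := by positivity
    -- (a) the four second derivatives are ε'-close to their value at g on V₃
    have E11 := Metric.tendsto_nhds.1 (hc11.tendsto g) ε' hε'
    have E12 := Metric.tendsto_nhds.1 (hc12.tendsto g) ε' hε'
    have E21 := Metric.tendsto_nhds.1 (hc21.tendsto g) ε' hε'
    have E22 := Metric.tendsto_nhds.1 (hc22.tendsto g) ε' hε'
    set V₃ : Set G := {pt | |e₁₁ pt - e₁₁ g| ≤ ε' ∧ |e₁₂ pt - e₁₂ g| ≤ ε' ∧
      |e₂₁ pt - e₂₁ g| ≤ ε' ∧ |e₂₂ pt - e₂₂ g| ≤ ε'} with hV₃def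
    have hV₃mem : V₃ ∈ 𝓝 g := by
      filter_upwards [E11, E12, E21, E22] with pt p11 p12 p21 p22
      rw [Real.dist_eq] at p11 p12 p21 p22
      exact ⟨le_of_lt p11, le_of_lt p12, le_of_lt p21, le_of_lt p22⟩
    -- (b) W₀, W₂ with g * W₀ * W₂ ⊆ V₃
    have hGG : Filter.Tendsto (fun p : G × G => g * p.1 * p.2) (𝓝 ((1:G), (1:G))) (𝓝 g) := by
      have hcont : Continuous (fun p : G × G => g * p.1 * p.2) :=
        (continuous_const.mul continuous_fst).mul continuous_snd
      simpa using hcont.tendsto ((1:G), (1:G))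
    have hpre := hGG hV₃mem
    rw [nhds_prod_eq] at hpre
    obtain ⟨W₀, hW₀, W₂, hW₂, hsub⟩ := Filter.mem_prod_iff.1 hpre
    have hbase_in : ∀ w₁ ∈ W₀, ∀ w₂ ∈ W₂, g * w₁ * w₂ ∈ V₃ := by
      intro w₁ h₁ w₂ h₂
      exact hsub (Set.mk_mem_prod h₁ h₂)
    -- (c) δ₂ such that short products of X₁, X₂ lie in W₂
    obtain ⟨Wp, hWp, hsplitp⟩ := exists_nhds_one_split hW₂
    obtain ⟨Wq, hWq, hsplitq⟩ := exists_nhds_one_split hWp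
    have hX12 : ∀ᶠ v in 𝓝 (0:ℝ), X₁.toFun v ∈ Wq ∧ X₂.toFun v ∈ Wq := by
      have t1 : Filter.Tendsto X₁.toFun (𝓝 0) (𝓝 1) := by
        have := X₁.continuous_toFun.tendsto 0; rwa [X₁.map_zero] at this
      have t2 : Filter.Tendsto X₂.toFun (𝓝 0) (𝓝 1) := by
        have := X₂.continuous_toFun.tendsto 0; rwa [X₂.map_zero] at this
      exact (t1.eventually hWq).and (t2.eventually hWq)
    obtain ⟨δ₂, hδ₂pos, hδ₂⟩ := abs_small_nhds hX12
    have hprod : ∀ v₁ v₂ v₃ v₄ : ℝ, |v₁| ≤ δ₂ → |v₂| ≤ δ₂ → |v₃| ≤ δ₂ → |v₄| ≤ δ₂ →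
        X₁.toFun v₁ * X₂.toFun v₂ * X₁.toFun v₃ * X₂.toFun v₄ ∈ W₂ := by
      intro v₁ v₂ v₃ v₄ h₁ h₂ h₃ h₄
      rw [mul_assoc (X₁.toFun v₁ * X₂.toFun v₂)]
      exact hsplitp _ (hsplitq _ (hδ₂ v₁ h₁).1 _ (hδ₂ v₂ h₂).2) _
        (hsplitq _ (hδ₂ v₃ h₃).1 _ (hδ₂ v₄ h₄).2)
    -- (d) uniform control of powers of the commutator word
    obtain ⟨δA, hδApos, NA, hNA1, hPW⟩ := powers_small X X₁ X₂ hcomm W₀ hW₀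
    refine ⟨min δA (min δ₂ 1), by positivity, ?_⟩
    intro s hsIoi hsd
    have hspos : 0 < s := hsIoi
    rw [Real.dist_eq, sub_zero] at hsd
    have hsabs : |s| = s := abs_of_pos hspos
    have hsδA : |s| ≤ δA := le_of_lt (lt_of_lt_of_le hsd (min_le_left _ _))
    have hsδ₂ : s ≤ δ₂ := by
      have := lt_of_lt_of_le hsd (le_trans (min_le_right _ _) (min_le_left _ _))
      linarith [le_abs_self s]
    -- (f) choose n
    set P : G := g * X.toFun (s ^ 2) with hPdef
    have hev : {w : G | |f (P * w) - f P| < ε' * s ^ 2} ∈ 𝓝 (1:G) := by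
      have h1 : Filter.Tendsto (fun w : G => P * w) (𝓝 1) (𝓝 P) := by
        simpa using (continuous_mul_left P).tendsto (1:G)
      have h2 := Metric.tendsto_nhds.1 (hfc.tendsto P) (ε' * s ^ 2) (by positivity)
      have h3 := h1.eventually h2
      apply h3.mono
      intro w hw
      show |f (P * w) - f P| < ε' * s ^ 2
      rw [← Real.dist_eq]
      exact hw
    obtain ⟨N₂, hN₂⟩ := hcomm (Set.Icc s s) isCompact_Icc _ hev
    set n : ℕ := max NA (max N₂ 1) with hn
    have hn1 : 1 ≤ n := le_trans (le_max_right N₂ 1) (le_max_right _ _)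
    have hnA : NA ≤ n := le_max_left _ _
    have hnN₂ : N₂ ≤ n := le_trans (le_max_left N₂ 1) (le_max_right _ _)
    have hnR : (1:ℝ) ≤ (n:ℝ) := by exact_mod_cast hn1
    have hnpos : (0:ℝ) < (n:ℝ) := by linarith
    set u : ℝ := s / (n:ℝ) with hu
    have hupos : 0 < u := div_pos hspos hnpos
    have hu0 : u ≠ 0 := ne_of_gt hupos
    have huabs : |u| = u := abs_of_pos hupos
    have hus : u ≤ s := by
      rw [hu, div_le_iff₀ hnpos]
      nlinarith
    have huδ₂ : |u| ≤ δ₂ := by rw [huabs]; linarith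
    set x : G := cword X₁ X₂ u with hx
    set F : ℕ → ℝ := fun k => f (g * x ^ k) with hF
    -- base points are controlled
    have hbase : ∀ k ≤ n ^ 2, x ^ k ∈ W₀ := fun k hk => hPW n hnA s hsδA k hk
    -- single step estimate
    have hstep : ∀ k ∈ Finset.range (n ^ 2), |F (k+1) - F k - u ^ 2 * β| ≤ 6 * ε' * u ^ 2 := by
      intro k hk
      rw [Finset.mem_range] at hk
      have hin : ∀ v₁ v₂ v₃ v₄ : ℝ, |v₁| ≤ |u| → |v₂| ≤ |u| → |v₃| ≤ |u| → |v₄| ≤ |u| →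
          (g * x ^ k) * X₁.toFun v₁ * X₂.toFun v₂ * X₁.toFun v₃ * X₂.toFun v₄ ∈ V₃ := by
        intro v₁ v₂ v₃ v₄ h₁ h₂ h₃ h₄
        have hw₂ : X₁.toFun v₁ * X₂.toFun v₂ * X₁.toFun v₃ * X₂.toFun v₄ ∈ W₂ :=
          hprod v₁ v₂ v₃ v₄ (le_trans h₁ huδ₂) (le_trans h₂ huδ₂) (le_trans h₃ huδ₂)
            (le_trans h₄ huδ₂)
        have heq : (g * x ^ k) * X₁.toFun v₁ * X₂.toFun v₂ * X₁.toFun v₃ * X₂.toFun v₄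
            = g * (x ^ k) * (X₁.toFun v₁ * X₂.toFun v₂ * X₁.toFun v₃ * X₂.toFun v₄) := by
          simp only [mul_assoc]
        rw [heq]
        exact hbase_in _ (hbase k (le_of_lt hk)) _ hw₂
      have hKE := key_estimate X₁ X₂ f d₁ d₂ e₁₁ e₁₂ e₂₁ e₂₂ hd1 hd2 h11 h21 h12 h22 g ε' V₃
        (fun pt hpt => hpt) (g * x ^ k) u hu0 hin
      have harg : (g * x ^ k) * cword X₁ X₂ u = g * x ^ (k + 1) := by
        rw [pow_succ, ← mul_assoc]
      rw [harg] at hKE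
      exact hKE
    -- sum the steps
    have h1 : F (n ^ 2) - F 0 - (n ^ 2 : ℕ) * (u ^ 2 * β)
        = ∑ k ∈ Finset.range (n ^ 2), (F (k+1) - F k - u ^ 2 * β) := by
      rw [Finset.sum_sub_distrib, Finset.sum_range_sub, Finset.sum_const, Finset.card_range,
        nsmul_eq_mul]
    have hsumb : |F (n ^ 2) - F 0 - (n ^ 2 : ℕ) * (u ^ 2 * β)| ≤ (n ^ 2 : ℕ) * (6 * ε' * u ^ 2) := by
      rw [h1]
      calc |∑ k ∈ Finset.range (n ^ 2), (F (k+1) - F k - u ^ 2 * β)|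
          ≤ ∑ k ∈ Finset.range (n ^ 2), |F (k+1) - F k - u ^ 2 * β| :=
            Finset.abs_sum_le_sum_abs _ _
        _ ≤ ∑ _k ∈ Finset.range (n ^ 2), (6 * ε' * u ^ 2) := Finset.sum_le_sum hstep
        _ = (n ^ 2 : ℕ) * (6 * ε' * u ^ 2) := by
            rw [Finset.sum_const, Finset.card_range, nsmul_eq_mul]
    have hnne : (n:ℝ) ≠ 0 := ne_of_gt hnpos
    have hnu2 : ((n ^ 2 : ℕ) : ℝ) * u ^ 2 = s ^ 2 := by
      rw [hu]
      push_cast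
      field_simp
    have hsumb' : |F (n ^ 2) - F 0 - s ^ 2 * β| ≤ 6 * ε' * s ^ 2 := by
      have e1 : ((n ^ 2 : ℕ) : ℝ) * (u ^ 2 * β) = s ^ 2 * β := by
        rw [← mul_assoc, hnu2]
      have e2 : ((n ^ 2 : ℕ) : ℝ) * (6 * ε' * u ^ 2) = 6 * ε' * s ^ 2 := by
        rw [← hnu2]; ring
      rw [← e1, ← e2]
      exact hsumb
    -- Trotter approximation
    have htrot := hN₂ n hnN₂ s (Set.mem_Icc.2 ⟨le_refl s, le_refl s⟩)
    simp only [Set.mem_setOf_eq] at htrot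
    have hword : X₁.toFun (s / (n : ℝ)) * X₂.toFun (s / (n : ℝ)) *
        (X₁.toFun (s / (n : ℝ)))⁻¹ * (X₂.toFun (s / (n : ℝ)))⁻¹ = x := by
      rw [hx, hu]; rfl
    rw [hword] at htrot
    have harg2 : P * ((X.toFun (s ^ 2))⁻¹ * x ^ (n ^ 2)) = g * x ^ (n ^ 2) := by
      rw [hPdef, mul_assoc, mul_inv_cancel_left]
    rw [harg2] at htrot
    -- combine
    have hF0 : F 0 = f g := by rw [hF]; simp
    have hFn : F (n ^ 2) = f (g * x ^ (n ^ 2)) := rfl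
    have hfinal : |f P - f g - s ^ 2 * β| ≤ 7 * ε' * s ^ 2 := by
      have t1 : |f P - f (g * x ^ (n ^ 2))| < ε' * s ^ 2 := by
        rw [abs_sub_comm]; exact htrot
      have t2 : |f (g * x ^ (n ^ 2)) - f g - s ^ 2 * β| ≤ 6 * ε' * s ^ 2 := by
        rw [← hFn, ← hF0]; exact hsumb'
      calc |f P - f g - s ^ 2 * β|
          = |(f P - f (g * x ^ (n ^ 2))) + (f (g * x ^ (n ^ 2)) - f g - s ^ 2 * β)| := by
            ring_nf
        _ ≤ |f P - f (g * x ^ (n ^ 2))| + |f (g * x ^ (n ^ 2)) - f g - s ^ 2 * β| :=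
            abs_add_le _ _
        _ ≤ ε' * s ^ 2 + 6 * ε' * s ^ 2 := add_le_add (le_of_lt t1) t2
        _ = 7 * ε' * s ^ 2 := by ring
    have hs2pos : (0:ℝ) < s ^ 2 := by positivity
    have hAs : A s - β = (f P - f g - s ^ 2 * β) / s ^ 2 := by
      rw [hA]
      simp only [hPdef]
      field_simp
    rw [Real.dist_eq, hAs, abs_div, abs_of_pos hs2pos, div_lt_iff₀ hs2pos]
    calc |f P - f g - s ^ 2 * β| ≤ 7 * ε' * s ^ 2 := hfinal
      _ < ε * s ^ 2 := by
          rw [hε'def]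
          nlinarith
  exact tendsto_nhds_unique claimA claimB

end Assembly

theorem dirDeriv_commutator
    {G Y : Type*} [Group G] [TopologicalSpace G] [IsTopologicalGroup G]
    [AddCommGroup Y] [Module ℝ Y] [TopologicalSpace Y] [IsTopologicalAddGroup Y]
    [ContinuousSMul ℝ Y] [LocallyConvexSpace ℝ Y] [T2Space Y]
    (φ : G → Y) (D : OneParamSubgroup G → G → Y)
    (D2 : OneParamSubgroup G → OneParamSubgroup G → G → Y)
    (hφ : IsLUC2 φ D D2)
    (X X₁ X₂ : OneParamSubgroup G)
    (hcomm : ∀ K : Set ℝ, IsCompact K → ∀ W ∈ 𝓝 (1 : G), ∃ N : ℕ,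
      ∀ n : ℕ, N ≤ n → ∀ t ∈ K,
        (X.toFun (t ^ 2))⁻¹ *
          (X₁.toFun (t / (n : ℝ)) * X₂.toFun (t / (n : ℝ)) *
            (X₁.toFun (t / (n : ℝ)))⁻¹ * (X₂.toFun (t / (n : ℝ)))⁻¹) ^ (n ^ 2) ∈ W)
    (g : G) :
    D X g = D2 X₁ X₂ g - D2 X₂ X₁ g := by
  obtain ⟨⟨hUCφ, hder1, hUC1⟩, hder2, hUC2⟩ := hφ
  by_contra hne
  obtain ⟨ℓ, hℓ⟩ := geometric_hahn_banach_point_point hne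
  have key : ℓ (D X g) = ℓ (D2 X₁ X₂ g) - ℓ (D2 X₂ X₁ g) :=
    scalar_limit X X₁ X₂ hcomm
      (fun x => ℓ (φ x)) (fun x => ℓ (D X₁ x)) (fun x => ℓ (D X₂ x))
      (fun x => ℓ (D2 X₁ X₁ x)) (fun x => ℓ (D2 X₁ X₂ x))
      (fun x => ℓ (D2 X₂ X₁ x)) (fun x => ℓ (D2 X₂ X₂ x))
      (ℓ.continuous.comp hUCφ.continuous)
      (ℓ.continuous.comp (hUC2 X₁ X₁).continuous)
      (ℓ.continuous.comp (hUC2 X₁ X₂).continuous)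
      (ℓ.continuous.comp (hUC2 X₂ X₁).continuous)
      (ℓ.continuous.comp (hUC2 X₂ X₂).continuous)
      (fun a => HasDirDerivAt.clm_comp ℓ (hder1 X₁ a))
      (fun a => HasDirDerivAt.clm_comp ℓ (hder1 X₂ a))
      (fun a => HasDirDerivAt.clm_comp ℓ (hder2 X₁ X₁ a))
      (fun a => HasDirDerivAt.clm_comp ℓ (hder2 X₂ X₁ a))
      (fun a => HasDirDerivAt.clm_comp ℓ (hder2 X₁ X₂ a))
      (fun a => HasDirDerivAt.clm_comp ℓ (hder2 X₂ X₂ a))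
      g (ℓ (D X g)) (HasDirDerivAt.clm_comp ℓ (hder1 X g))
  have : ℓ (D X g) = ℓ (D2 X₁ X₂ g - D2 X₂ X₁ g) := by rw [map_sub]; exact key
  rw [this] at hℓ
  exact lt_irrefl _ hℓ
end
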